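/- (Block SPS exactness for independent noise.) Fix a block length T with n = KT for an integer K. Suppose the random signs are generated blockwise: ᾱ_{i,k}, i ∈ {1,...,m−1}, k ∈ {1,...,K}, are i.i.d. random signs, and α_{i,(k−1)T+j} := ᾱ_{i,k} for j ∈ {1,...,T}. Under assumptions A1 (the noises N₁,...,Nₙ are independent and each symmetrically distributed about zero) and A2 (Rₙ is invertible), the Block SPS confidence region still satisfies P(θ* ∈ Θ̂ₙ) = 1 − q/m. -/

import Mathlib

open MeasureTheory ProbabilityTheory Matrix
open scoped ENNReal Classical

noncomputable section

/-- Squared Euclidean norm of a vector in `ℝ^d`. -/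
def spsNormSq {d : ℕ} (v : Fin d → ℝ) : ℝ := ∑ j, v j ^ 2

/-- The strict total order `≻_π`. -/
def SuccPi {m : ℕ} (σ : Equiv.Perm (Fin m)) (z : Fin m → ℝ) (k j : Fin m) : Prop :=
  z j < z k ∨ (z k = z j ∧ σ j < σ k)

/-- A random sign: takes values `1` and `-1` with probability `1/2` each. -/
def IsRandomSign {Ω : Type*} [MeasurableSpace Ω] (μ : Measure Ω) (f : Ω → ℝ) : Prop :=
  μ {ω | f ω = 1} = 1 / 2 ∧ μ {ω | f ω = -1} = 1 / 2

/-- The (sign-perturbed) sums `S_i(θ)`. -/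
def spsS {d n m : ℕ} (φ : Fin n → Fin d → ℝ) (Rhalf : Matrix (Fin d) (Fin d) ℝ)
    (Y : Fin n → ℝ) (a : Fin m → Fin n → ℝ) (i : Fin m) (θ : Fin d → ℝ) : Fin d → ℝ :=
  Rhalf⁻¹ *ᵥ ((n : ℝ)⁻¹ • ∑ t, (a i t * (Y t - φ t ⬝ᵥ θ)) • φ t)

/-- The rank `𝓡(θ)`. -/
def spsRank {d n m : ℕ} [NeZero m] (φ : Fin n → Fin d → ℝ)
    (Rhalf : Matrix (Fin d) (Fin d) ℝ) (Y : Fin n → ℝ) (a : Fin m → Fin n → ℝ)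
    (σ : Equiv.Perm (Fin m)) (θ : Fin d → ℝ) : ℕ :=
  1 + Set.ncard {i : Fin m | i ≠ 0 ∧
      SuccPi σ (fun j => spsNormSq (spsS φ Rhalf Y a j θ)) 0 i}

/-- The SPS confidence region `Θ̂ₙ`. -/
def spsRegion {d n m : ℕ} [NeZero m] (φ : Fin n → Fin d → ℝ)
    (Rhalf : Matrix (Fin d) (Fin d) ℝ) (Y : Fin n → ℝ) (a : Fin m → Fin n → ℝ)
    (σ : Equiv.Perm (Fin m)) (q : ℕ) : Set (Fin d → ℝ) :=
  {θ | spsRank φ Rhalf Y a σ θ ≤ m - q}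

/-- The block index of a time index `t ∈ {0, …, KT−1}`: block `⌊t/T⌋`. -/
def blockIdx (K T : ℕ) (t : Fin (K * T)) : Fin K :=
  ⟨t.1 / T, Nat.div_lt_of_lt_mul (Nat.mul_comm K T ▸ t.2)⟩

instance {k : ℕ} : MeasurableSpace (Equiv.Perm (Fin k)) := ⊤

-- rank auxiliary
def rnk {m : ℕ} (σ : Equiv.Perm (Fin m)) (z : Fin m → ℝ) (j : Fin m) : ℕ :=
  1 + Set.ncard {i | i ≠ j ∧ SuccPi σ z j i}

def pkey {m : ℕ} (σ : Equiv.Perm (Fin m)) (z : Fin m → ℝ) (i : Fin m) : ℝ ×ₗ Fin m :=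
  toLex (z i, σ i)

lemma succPi_iff_lex {m : ℕ} (σ : Equiv.Perm (Fin m)) (z : Fin m → ℝ) (j i : Fin m) :
    SuccPi σ z j i ↔ pkey σ z i < pkey σ z j := by
  rw [pkey, pkey, Prod.Lex.lt_iff]
  unfold SuccPi
  constructor
  · rintro (h | ⟨h1, h2⟩)
    · exact Or.inl h
    · exact Or.inr ⟨h1.symm, h2⟩
  · rintro (h | ⟨h1, h2⟩)
    · exact Or.inl h
    · exact Or.inr ⟨h1.symm, h2⟩

lemma pkey_inj {m : ℕ} (σ : Equiv.Perm (Fin m)) (z : Fin m → ℝ) :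
    Function.Injective (pkey σ z) := by
  intro i j h
  rw [pkey, pkey] at h
  have h2 : (z i, σ i) = (z j, σ j) := toLex.injective h
  exact σ.injective (congrArg Prod.snd h2)

lemma rnk_eq_card {m : ℕ} (σ : Equiv.Perm (Fin m)) (z : Fin m → ℝ) (j : Fin m) :
    rnk σ z j = 1 + (Finset.univ.filter fun i => pkey σ z i < pkey σ z j).card := by
  rw [rnk]
  congr 1
  have : {i | i ≠ j ∧ SuccPi σ z j i}
      = ↑(Finset.univ.filter fun i => pkey σ z i < pkey σ z j) := by
    ext i
    simp only [Set.mem_setOf_eq, Finset.coe_filter, Finset.mem_univ, true_and]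
    rw [succPi_iff_lex]
    constructor
    · exact fun h => h.2
    · intro h
      refine ⟨fun hij => ?_, h⟩
      subst hij; exact lt_irrefl _ h
  rw [this, Set.ncard_coe_finset]

lemma cnt_lt_of_key_lt {m : ℕ} {γ : Type*} [LinearOrder γ] (key : Fin m → γ)
    {a b : Fin m} (h : key a < key b) :
    (Finset.univ.filter fun i => key i < key a).card
      < (Finset.univ.filter fun i => key i < key b).card := by
  apply Finset.card_lt_card
  rw [Finset.ssubset_iff_of_subset]
  · exact ⟨a, by simp [h], by simp⟩
  · intro i hi
    simp only [Finset.mem_filter, Finset.mem_univ, true_and] at hi ⊢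
    exact hi.trans h

lemma cnt_inj {m : ℕ} {γ : Type*} [LinearOrder γ] (key : Fin m → γ)
    (hkey : Function.Injective key) :
    Function.Injective (fun j => (Finset.univ.filter fun i => key i < key j).card) := by
  intro a b hab
  by_contra hne
  rcases lt_or_gt_of_ne (fun h : key a = key b => hne (hkey h)) with h | h
  · exact absurd hab (Nat.ne_of_lt (cnt_lt_of_key_lt key h))
  · exact absurd hab.symm (Nat.ne_of_lt (cnt_lt_of_key_lt key h))

lemma cnt_lt_m {m : ℕ} {γ : Type*} [LinearOrder γ] (key : Fin m → γ) (j : Fin m) :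
    (Finset.univ.filter fun i => key i < key j).card < m := by
  have : (Finset.univ.filter fun i => key i < key j) ⊆ Finset.univ.erase j := by
    intro i hi
    simp only [Finset.mem_filter, Finset.mem_univ, true_and] at hi
    simp only [Finset.mem_erase, Finset.mem_univ, and_true]
    intro hij; subst hij; exact lt_irrefl _ hi
  calc (Finset.univ.filter fun i => key i < key j).card
      ≤ (Finset.univ.erase j).card := Finset.card_le_card this
    _ < Finset.univ.card := Finset.card_erase_lt_of_mem (Finset.mem_univ j)
    _ = m := Finset.card_univ.trans (Fintype.card_fin m)

lemma rnk_one_le {m : ℕ} (σ : Equiv.Perm (Fin m)) (z : Fin m → ℝ) (j : Fin m) :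
    1 ≤ rnk σ z j := Nat.le_add_right 1 _

lemma rnk_le_m {m : ℕ} (σ : Equiv.Perm (Fin m)) (z : Fin m → ℝ) (j : Fin m) :
    rnk σ z j ≤ m := by
  rw [rnk_eq_card]
  exact Nat.one_add_le_iff.mpr (cnt_lt_m _ j)

lemma rnk_injective {m : ℕ} (σ : Equiv.Perm (Fin m)) (z : Fin m → ℝ) :
    Function.Injective (rnk σ z) := by
  intro a b hab
  rw [rnk_eq_card, rnk_eq_card] at hab
  exact cnt_inj (pkey σ z) (pkey_inj σ z) (Nat.add_left_cancel hab)

lemma rnk_surjective {m : ℕ} (σ : Equiv.Perm (Fin m)) (z : Fin m → ℝ) (r : ℕ)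
    (h1 : 1 ≤ r) (h2 : r ≤ m) : ∃ j, rnk σ z j = r := by
  have hm : 0 < m := lt_of_lt_of_le h1 h2
  let f : Fin m → Fin m := fun j => ⟨rnk σ z j - 1, by
    have := rnk_le_m σ z j
    have := rnk_one_le σ z j
    omega⟩
  have hfinj : Function.Injective f := by
    intro a b hab
    apply rnk_injective σ z
    have := congrArg Fin.val hab
    simp only [f] at this
    have ha := rnk_one_le σ z a
    have hb := rnk_one_le σ z b
    omega
  have hfsurj : Function.Surjective f := Finite.surjective_of_injective hfinj
  obtain ⟨j, hj⟩ := hfsurj ⟨r - 1, by omega⟩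
  refine ⟨j, ?_⟩
  have := congrArg Fin.val hj
  simp only [f] at this
  have := rnk_one_le σ z j
  omega

lemma rnk_relabel {m : ℕ} (σ τ : Equiv.Perm (Fin m)) (z : Fin m → ℝ) (j : Fin m) :
    rnk σ z (τ j) = rnk (σ * τ) (z ∘ τ) j := by
  rw [rnk_eq_card, rnk_eq_card]
  congr 1
  apply Finset.card_nbij' (fun i => τ.symm i) (fun i => τ i)
  · intro i hi
    simp only [Finset.mem_coe, Finset.mem_filter, Finset.mem_univ, true_and] at hi ⊢
    simpa [pkey, Function.comp, Equiv.Perm.mul_apply] using hi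
  · intro i hi
    simp only [Finset.mem_coe, Finset.mem_filter, Finset.mem_univ, true_and] at hi ⊢
    simpa [pkey, Function.comp, Equiv.Perm.mul_apply] using hi
  · intro i _; simp
  · intro i _; simp

lemma measurable_rnk {m : ℕ} (σ : Equiv.Perm (Fin m)) (j : Fin m) :
    Measurable (fun z : Fin m → ℝ => rnk σ z j) := by
  have : (fun z : Fin m → ℝ => rnk σ z j)
      = fun z => 1 + ∑ i : Fin m, if pkey σ z i < pkey σ z j then 1 else 0 := by
    funext z
    rw [rnk_eq_card, Finset.card_filter]
  rw [this]
  apply Measurable.add measurable_const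
  apply Finset.measurable_sum
  intro i _
  apply Measurable.ite _ measurable_const measurable_const
  have : {z : Fin m → ℝ | pkey σ z i < pkey σ z j}
      = {z : Fin m → ℝ | z i < z j} ∪ ({z | z i = z j} ∩ {z | σ i < σ j}) := by
    ext z
    simp only [Set.mem_setOf_eq, Set.mem_union, Set.mem_inter_iff, Set.mem_setOf_eq,
      pkey, Prod.Lex.lt_iff, ofLex_toLex]
  rw [this]
  apply MeasurableSet.union
  · exact measurableSet_lt (measurable_pi_apply i) (measurable_pi_apply j)
  · apply MeasurableSet.inter
    · exact measurableSet_eq_fun (measurable_pi_apply i) (measurable_pi_apply j)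
    · by_cases h : σ i < σ j <;> simp [h]

def sgnB (b : Bool) : ℝ := if b then 1 else -1

lemma sgnB_cases (b : Bool) : sgnB b = 1 ∨ sgnB b = -1 := by cases b <;> simp [sgnB]

lemma sgnB_mul (a b : Bool) : sgnB a * sgnB b = sgnB (a == b) := by
  cases a <;> cases b <;> norm_num [sgnB]

lemma sgnB_ne (a : Bool) : sgnB a ≠ sgnB (!a) := by cases a <;> norm_num [sgnB]

-- the flipped-law lemma
lemma flip_law {Ω : Type*} [MeasurableSpace Ω] (μ : Measure Ω) [IsProbabilityMeasure μ]
    {n : ℕ} (N : Fin n → Ω → ℝ) (hmeas : ∀ t, Measurable (N t))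
    (hind : iIndepFun N μ)
    (hsymm : ∀ t, μ.map (N t) = μ.map (fun ω => -(N t ω)))
    (ε : Fin n → ℝ) (hε : ∀ t, ε t = 1 ∨ ε t = -1) :
    μ.map (fun ω t => ε t * N t ω) = μ.map (fun ω t => N t ω) := by
  have hFmeas : Measurable (fun ω (t : Fin n) => ε t * N t ω) :=
    measurable_pi_lambda _ fun t => (hmeas t).const_mul _
  have hGmeas : Measurable (fun ω (t : Fin n) => N t ω) :=
    measurable_pi_lambda _ fun t => hmeas t
  have hind2 : iIndepFun (fun t ω => ε t * N t ω) μ := by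
    have := hind.comp (g := fun t (x : ℝ) => ε t * x)
      (fun t => (measurable_id.const_mul _))
    exact this
  apply ext_of_generate_finite _ generateFrom_pi.symm isPiSystem_pi
  · rintro s ⟨A, hA, rfl⟩
    have hA' : ∀ t, MeasurableSet (A t) := fun t => hA t (Set.mem_univ t)
    rw [Measure.map_apply hFmeas (MeasurableSet.univ_pi hA'),
      Measure.map_apply hGmeas (MeasurableSet.univ_pi hA')]
    have hpre1 : (fun ω (t : Fin n) => ε t * N t ω) ⁻¹' Set.pi Set.univ A
        = ⋂ t, (fun ω => ε t * N t ω) ⁻¹' A t := by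
      ext ω; simp [Set.mem_univ_pi]
    have hpre2 : (fun ω (t : Fin n) => N t ω) ⁻¹' Set.pi Set.univ A
        = ⋂ t, (N t) ⁻¹' A t := by
      ext ω; simp [Set.mem_univ_pi]
    rw [hpre1, hpre2]
    rw [hind2.meas_iInter (fun t => ⟨A t, hA' t, rfl⟩),
      hind.meas_iInter (fun t => ⟨A t, hA' t, rfl⟩)]
    apply Finset.prod_congr rfl
    intro t _
    rcases hε t with h | h
    · simp [h]
    · have : (fun ω => ε t * N t ω) = fun ω => -(N t ω) := by
        funext ω; rw [h]; ring
      rw [this, ← Measure.map_apply (f := fun ω => -(N t ω)) ((hmeas t).neg) (hA' t),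
        ← Measure.map_apply (hmeas t) (hA' t), ← hsymm t]
  · simp [Measure.map_apply hFmeas MeasurableSet.univ, Measure.map_apply hGmeas MeasurableSet.univ]

section Patterns

variable {m K : ℕ} [NeZero m]

def PatIdx (m K : ℕ) [NeZero m] : Type := ({i : Fin m // i ≠ 0} × Fin K)

instance : Fintype (PatIdx m K) := instFintypeProd _ _
instance : DecidableEq (PatIdx m K) := instDecidableEqProd

def Pat (m K : ℕ) [NeZero m] : Type := PatIdx m K → Bool

instance : Fintype (Pat m K) := Pi.instFintype
instance : DecidableEq (Pat m K) := Fintype.decidablePiFintype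

def betaF (s : Pat m K) (i : Fin m) (k : Fin K) : Bool :=
  if h : i = 0 then true else s (⟨i, h⟩, k)

def svalF (s : Pat m K) (i : Fin m) (k : Fin K) : ℝ := sgnB (betaF s i k)

lemma svalF_zero (s : Pat m K) (k : Fin K) : svalF s 0 k = 1 := by
  simp [svalF, betaF, sgnB]

lemma svalF_cases (s : Pat m K) (i : Fin m) (k : Fin K) :
    svalF s i k = 1 ∨ svalF s i k = -1 := sgnB_cases _

lemma svalF_ne_zero (s : Pat m K) (i : Fin m) (k : Fin K) (h : i ≠ 0) :
    svalF s i k = sgnB (s (⟨i, h⟩, k)) := by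
  simp [svalF, betaF, h]

def PsiF (τ : Equiv.Perm (Fin m)) (s : Pat m K) : Pat m K :=
  fun p => betaF s (τ p.1.1) p.2 == betaF s (τ 0) p.2

lemma betaF_PsiF (τ : Equiv.Perm (Fin m)) (s : Pat m K) (j : Fin m) (k : Fin K) :
    betaF (PsiF τ s) j k = (betaF s (τ j) k == betaF s (τ 0) k) := by
  by_cases h : j = 0
  · subst h
    simp [betaF]
  · simp [betaF, h, PsiF]

lemma PsiF_leftinv (τ : Equiv.Perm (Fin m)) (s : Pat m K) : PsiF τ⁻¹ (PsiF τ s) = s := by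
  funext p
  obtain ⟨⟨i, hi⟩, k⟩ := p
  show (betaF (PsiF τ s) (τ⁻¹ i) k == betaF (PsiF τ s) (τ⁻¹ 0) k) = s (⟨i, hi⟩, k)
  rw [betaF_PsiF, betaF_PsiF]
  rw [Equiv.Perm.inv_def, Equiv.apply_symm_apply, Equiv.apply_symm_apply]
  have h0 : betaF s 0 k = true := by simp [betaF]
  rw [h0]
  have hβ : betaF s i k = s (⟨i, hi⟩, k) := by rw [betaF, dif_neg hi]
  rw [hβ]
  cases s (⟨i, hi⟩, k) <;> cases betaF s (τ 0) k <;> rfl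

def PsiE (τ : Equiv.Perm (Fin m)) : Pat m K ≃ Pat m K where
  toFun := PsiF τ
  invFun := PsiF τ⁻¹
  left_inv := PsiF_leftinv τ
  right_inv := fun s => by
    have := PsiF_leftinv τ⁻¹ s
    rwa [inv_inv] at this

lemma svalF_PsiF (τ : Equiv.Perm (Fin m)) (s : Pat m K) (i : Fin m) (k : Fin K) :
    svalF (PsiF τ s) i k = svalF s (τ i) k * svalF s (τ 0) k := by
  rw [svalF, betaF_PsiF, ← sgnB_mul]
  rfl

end Patterns


lemma measurable_quad {d n : ℕ} (φ : Fin n → Fin d → ℝ) (M : Matrix (Fin d) (Fin d) ℝ)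
    (c : ℝ) (a : Fin n → ℝ) :
    Measurable (fun x : Fin n → ℝ => spsNormSq (M *ᵥ (c • ∑ t, (a t * x t) • φ t))) := by
  unfold spsNormSq
  apply Finset.measurable_sum
  intro j _
  apply Measurable.pow _ measurable_const
  simp only [Matrix.mulVec, dotProduct, Pi.smul_apply, Finset.sum_apply, smul_eq_mul]
  apply Finset.measurable_sum
  intro l _
  apply Measurable.const_mul
  apply Measurable.const_mul
  apply Finset.measurable_sum
  intro t _
  exact ((measurable_pi_apply t).const_mul _).mul_const _

/-- **Block SPS exactness for independent noise.** With `n = K·T` and blockwise-constant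
random signs `α_{i,(k−1)T+j} = ᾱ_{i,k}`, under A1 and A2 the Block SPS confidence region
still contains the true parameter with exact probability `1 − q/m`. -/
theorem block_sps_exact_confidence
    {Ω : Type*} [MeasurableSpace Ω] (μ : Measure Ω) [IsProbabilityMeasure μ]
    (d K T m q : ℕ) [NeZero m] (hK : 0 < K) (hT : 0 < T) (hq : 0 < q) (hqm : q < m)
    (φ : Fin (K * T) → Fin d → ℝ)
    (Rn : Matrix (Fin d) (Fin d) ℝ)
    (hRn : Rn = ((K * T : ℕ) : ℝ)⁻¹ • ∑ t, vecMulVec (φ t) (φ t))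
    (hRnPD : Rn.PosDef)
    (Rhalf : Matrix (Fin d) (Fin d) ℝ)
    (hRhalfPD : Rhalf.PosDef)
    (hRhalf : Rhalf * Rhalfᵀ = Rn)
    (θstar : Fin d → ℝ)
    -- the noises: independent, each symmetrically distributed about zero (A1)
    (N : Fin (K * T) → Ω → ℝ)
    (hNmeas : ∀ t, Measurable (N t))
    (hNindep : iIndepFun N μ)
    (hNsymm : ∀ t, μ.map (N t) = μ.map (fun ω => -(N t ω)))
    -- the blockwise random signs, with `abar 0 ≡ 1` the reference index
    (abar : Fin m → Fin K → Ω → ℝ)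
    (habar0 : ∀ k ω, abar 0 k ω = 1)
    (habarmeas : ∀ i k, Measurable (abar i k))
    (habarindep : iIndepFun
      (fun p : Fin m × Fin K => abar p.1 p.2) μ)
    (habarsign : ∀ i : Fin m, i ≠ 0 → ∀ k, IsRandomSign μ (abar i k))
    -- the uniformly distributed random permutation
    (π : Ω → Equiv.Perm (Fin m))
    (hπ : ∀ σ : Equiv.Perm (Fin m), μ {ω | π ω = σ} = (m.factorial : ℝ≥0∞)⁻¹)
    -- the noises, the blockwise signs and the permutation are mutually independent
    (hgroups : iIndep
      ![MeasurableSpace.comap (fun ω (t : Fin (K * T)) => N t ω) inferInstance,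
        MeasurableSpace.comap (fun ω (p : Fin m × Fin K) => abar p.1 p.2 ω) inferInstance,
        MeasurableSpace.comap π inferInstance] μ) :
    μ {ω | θstar ∈ spsRegion φ Rhalf (fun t => φ t ⬝ᵥ θstar + N t ω)
        (fun i t => abar i (blockIdx K T t) ω) (π ω) q}
      = ENNReal.ofReal (1 - (q : ℝ) / m) := by
  classical
  -- abbreviations
  let blk : Fin (K * T) → Fin K := blockIdx K T
  let Nvec : Ω → Fin (K * T) → ℝ := fun ω t => N t ω
  have hNvec : Measurable Nvec := measurable_pi_lambda _ hNmeas
  let ν : Measure (Fin (K * T) → ℝ) := μ.map Nvec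
  have hνprob : IsProbabilityMeasure ν := Measure.isProbabilityMeasure_map hNvec.aemeasurable
  -- the deterministic functional
  let Fm : (Fin m → Fin K → ℝ) → (Fin (K * T) → ℝ) → Fin m → ℝ :=
    fun c x i => spsNormSq (Rhalf⁻¹ *ᵥ (((K * T : ℕ) : ℝ)⁻¹ • ∑ t, (c i (blk t) * x t) • φ t))
  have hFmmeas : ∀ c, Measurable (Fm c) := by
    intro c
    apply measurable_pi_lambda
    intro i
    exact measurable_quad φ Rhalf⁻¹ _ _
  -- the random Z vector
  let Zf : Ω → Fin m → ℝ := fun ω j =>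
    spsNormSq (spsS φ Rhalf (fun t => φ t ⬝ᵥ θstar + N t ω)
      (fun i t => abar i (blockIdx K T t) ω) j θstar)
  -- the event
  let E : Set Ω := {ω | rnk (π ω) (Zf ω) 0 ≤ m - q}
  have hEeq : {ω | θstar ∈ spsRegion φ Rhalf (fun t => φ t ⬝ᵥ θstar + N t ω)
      (fun i t => abar i (blockIdx K T t) ω) (π ω) q} = E := rfl
  rw [hEeq]
  -- sign patterns
  let cP : ℕ := Fintype.card (PatIdx m K)
  let Bpre : Pat m K → Set (Fin m × Fin K → ℝ) :=
    fun s => {b | ∀ p : PatIdx m K, b (p.1.1, p.2) = sgnB (s p)}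
  have hBpre : ∀ s, MeasurableSet (Bpre s) := by
    intro s
    have : Bpre s = ⋂ p : PatIdx m K, (fun b : Fin m × Fin K → ℝ => b (p.1.1, p.2)) ⁻¹' {sgnB (s p)} := by
      ext b; simp [Bpre, Set.mem_iInter]
    rw [this]
    exact MeasurableSet.iInter fun p => (measurable_pi_apply _) (measurableSet_singleton _)
  let Bset : Pat m K → Set Ω :=
    fun s => (fun ω (p : Fin m × Fin K) => abar p.1 p.2 ω) ⁻¹' (Bpre s)
  have hBmem : ∀ s ω, ω ∈ Bset s ↔ ∀ p : PatIdx m K, abar p.1.1 p.2 ω = sgnB (s p) :=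
    fun s ω => Iff.rfl
  -- Z on Bset
  have hZB : ∀ s : Pat m K, ∀ ω ∈ Bset s, Zf ω = Fm (svalF s) (Nvec ω) := by
    intro s ω hω
    have habω : ∀ j k, abar j k ω = svalF s j k := by
      intro j k
      by_cases hj : j = 0
      · subst hj; rw [habar0, svalF_zero]
      · rw [svalF_ne_zero s j k hj]; exact (hBmem s ω).mp hω ⟨⟨j, hj⟩, k⟩
    funext j
    show spsNormSq _ = spsNormSq _
    rw [spsS]
    have hsum : ∑ t : Fin (K * T),
          (abar j (blockIdx K T t) ω * (φ t ⬝ᵥ θstar + N t ω - φ t ⬝ᵥ θstar)) • φ t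
        = ∑ t : Fin (K * T), (svalF s j (blk t) * Nvec ω t) • φ t := by
      apply Finset.sum_congr rfl
      intro t _
      rw [add_sub_cancel_left, habω]
    rw [hsum]
  -- measure of Bset
  have hBval : ∀ s : Pat m K, μ (Bset s) = (2 : ℝ≥0∞)⁻¹ ^ cP := by
    intro s
    have hBeq : Bset s = ⋂ p ∈ Finset.univ.filter (fun p : Fin m × Fin K => p.1 ≠ 0),
        (abar p.1 p.2) ⁻¹' {svalF s p.1 p.2} := by
      ext ω
      simp only [Set.mem_iInter, Finset.mem_filter, Finset.mem_univ, true_and,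
        Set.mem_preimage, Set.mem_singleton_iff]
      constructor
      · intro h p hp
        rw [svalF_ne_zero s p.1 p.2 hp]
        exact h ⟨⟨p.1, hp⟩, p.2⟩
      · intro h p
        have := h (p.1.1, p.2) p.1.2
        rwa [svalF_ne_zero s p.1.1 p.2 p.1.2] at this
    rw [hBeq, habarindep.meas_biInter
      (fun p _ => ⟨{svalF s p.1 p.2}, measurableSet_singleton _, rfl⟩)]
    have hhalf : ∀ p ∈ Finset.univ.filter (fun p : Fin m × Fin K => p.1 ≠ 0),
        μ ((abar p.1 p.2) ⁻¹' {svalF s p.1 p.2}) = (2 : ℝ≥0∞)⁻¹ := by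
      intro p hp
      have hp1 : p.1 ≠ 0 := (Finset.mem_filter.mp hp).2
      have hpre : ∀ v : ℝ, (abar p.1 p.2) ⁻¹' {v} = {ω | abar p.1 p.2 ω = v} := fun v => rfl
      rcases svalF_cases s p.1 p.2 with h | h <;> rw [h, hpre]
      · rw [(habarsign p.1 hp1 p.2).1]; norm_num
      · rw [(habarsign p.1 hp1 p.2).2]; norm_num
    rw [Finset.prod_congr rfl hhalf, Finset.prod_const]
    congr 1
    have e : PatIdx m K ≃ {p : Fin m × Fin K // p.1 ≠ 0} :=
      { toFun := fun p => ⟨(p.1.1, p.2), p.1.2⟩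
        invFun := fun q => (⟨q.1.1, q.2⟩, q.1.2)
        left_inv := fun p => rfl
        right_inv := fun q => rfl }
    rw [show cP = Fintype.card (PatIdx m K) from rfl, Fintype.card_congr e,
      Fintype.card_subtype]
  -- a.e. cover by patterns
  have hcover : μ ((⋃ s : Pat m K, Bset s)ᶜ) = 0 := by
    apply measure_mono_null (t := ⋃ p : PatIdx m K,
      {ω | abar p.1.1 p.2 ω ≠ 1 ∧ abar p.1.1 p.2 ω ≠ -1})
    · intro ω hω
      simp only [Set.mem_compl_iff, Set.mem_iUnion] at hω
      by_contra hcon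
      simp only [Set.mem_iUnion, Set.mem_setOf_eq, not_exists, not_and, not_not] at hcon
      apply hω
      refine ⟨fun p => decide (abar p.1.1 p.2 ω = 1), ?_⟩
      refine (hBmem _ ω).mpr ?_
      intro p
      by_cases h1 : abar p.1.1 p.2 ω = 1
      · simp [h1, sgnB]
      · have h2 : abar p.1.1 p.2 ω = -1 := hcon p h1
        simp only [h1, h2, sgnB, decide_eq_true_eq]
        norm_num
    · apply measure_iUnion_null
      intro p
      have hset : {ω | abar p.1.1 p.2 ω ≠ 1 ∧ abar p.1.1 p.2 ω ≠ -1}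
          = ({ω | abar p.1.1 p.2 ω = 1} ∪ {ω | abar p.1.1 p.2 ω = -1})ᶜ := by
        ext ω; simp [not_or]
      rw [hset]
      have hm1 : MeasurableSet {ω | abar p.1.1 p.2 ω = 1} :=
        (habarmeas p.1.1 p.2) (measurableSet_singleton 1)
      have hm2 : MeasurableSet {ω | abar p.1.1 p.2 ω = -1} :=
        (habarmeas p.1.1 p.2) (measurableSet_singleton (-1))
      rw [measure_compl (hm1.union hm2) (measure_ne_top μ _)]
      have hdisj : Disjoint {ω | abar p.1.1 p.2 ω = 1} {ω | abar p.1.1 p.2 ω = -1} := by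
        rw [Set.disjoint_left]
        intro ω h1 h2
        simp only [Set.mem_setOf_eq] at h1 h2
        rw [h1] at h2; norm_num at h2
      rw [measure_union hdisj hm2, (habarsign p.1.1 p.1.2 p.2).1,
        (habarsign p.1.1 p.1.2 p.2).2, measure_univ]
      rw [show (1:ℝ≥0∞)/2 + 1/2 = 1 by
        rw [one_div, ENNReal.inv_two_add_inv_two], tsub_self]
  -- triple product
  have htriple : ∀ (D : Set (Fin (K * T) → ℝ)), MeasurableSet D →
      ∀ (s : Pat m K) (σ : Equiv.Perm (Fin m)),
      μ (Nvec ⁻¹' D ∩ Bset s ∩ {ω | π ω = σ})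
        = ν D * ((2 : ℝ≥0∞)⁻¹ ^ cP * ((m.factorial : ℝ≥0∞))⁻¹) := by
    intro D hD s σ
    have hmeas3 : ∀ i : Fin 3, MeasurableSet[
        (![MeasurableSpace.comap (fun ω (t : Fin (K * T)) => N t ω) inferInstance,
          MeasurableSpace.comap (fun ω (p : Fin m × Fin K) => abar p.1 p.2 ω) inferInstance,
          MeasurableSpace.comap π inferInstance] : Fin 3 → MeasurableSpace Ω) i]
        ((![Nvec ⁻¹' D, Bset s, {ω | π ω = σ}] : Fin 3 → Set Ω) i) := by
      intro i
      fin_cases i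
      · exact ⟨D, hD, rfl⟩
      · exact ⟨Bpre s, hBpre s, rfl⟩
      · exact ⟨{σ}, trivial, rfl⟩
    have h3 := hgroups.meas_iInter hmeas3
    have hiI : (⋂ i : Fin 3, (![Nvec ⁻¹' D, Bset s, {ω | π ω = σ}] : Fin 3 → Set Ω) i)
        = Nvec ⁻¹' D ∩ Bset s ∩ {ω | π ω = σ} := by
      ext ω
      simp only [Set.mem_iInter, Fin.forall_fin_succ, Set.mem_inter_iff]
      simp only [Matrix.cons_val_zero, Matrix.cons_val_one, Matrix.head_cons,
        Matrix.cons_val_two, Matrix.tail_cons, IsEmpty.forall_iff, and_true]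
      tauto
    rw [hiI] at h3
    rw [h3, Fin.prod_univ_three]
    simp only [Matrix.cons_val_zero, Matrix.cons_val_one, Matrix.head_cons,
      Matrix.cons_val_two, Matrix.tail_cons]
    rw [← Measure.map_apply hNvec hD, hBval s, hπ σ]
    ring
  -- flip invariance of ν
  have hflip : ∀ (ε : Fin (K * T) → ℝ), (∀ t, ε t = 1 ∨ ε t = -1) →
      ∀ D : Set (Fin (K * T) → ℝ), MeasurableSet D →
      ν ((fun x (t : Fin (K * T)) => ε t * x t) ⁻¹' D) = ν D := by
    intro ε hε D hD
    have hfl : Measurable (fun x : Fin (K * T) → ℝ => fun t => ε t * x t) :=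
      measurable_pi_lambda _ fun t => (measurable_pi_apply t).const_mul _
    show (μ.map Nvec) _ = (μ.map Nvec) D
    rw [Measure.map_apply hNvec (hfl hD), Measure.map_apply hNvec hD]
    have hcomp : Nvec ⁻¹' ((fun x (t : Fin (K * T)) => ε t * x t) ⁻¹' D)
        = (fun ω (t : Fin (K * T)) => ε t * N t ω) ⁻¹' D := rfl
    rw [hcomp]
    have hm1 : Measurable (fun ω (t : Fin (K * T)) => ε t * N t ω) :=
      measurable_pi_lambda _ fun t => (hNmeas t).const_mul _
    rw [← Measure.map_apply hm1 hD,
      flip_law μ N hNmeas hNindep hNsymm ε hε, Measure.map_apply hNvec hD]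
  -- the rank-level sets
  let Gset : Fin m → Pat m K → Equiv.Perm (Fin m) → ℕ → Set (Fin (K * T) → ℝ) :=
    fun j s σ r => {x | rnk σ (Fm (svalF s) x) j = r}
  have hGmeas : ∀ j s σ r, MeasurableSet (Gset j s σ r) := by
    intro j s σ r
    exact (hFmmeas (svalF s)) ((measurable_rnk σ j) (measurableSet_singleton r))
  let Dset : Pat m K → Equiv.Perm (Fin m) → Set (Fin (K * T) → ℝ) :=
    fun s σ => {x | rnk σ (Fm (svalF s) x) 0 ≤ m - q}
  have hDmeas : ∀ s σ, MeasurableSet (Dset s σ) := by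
    intro s σ
    exact (hFmmeas (svalF s)) ((measurable_rnk σ 0) (measurableSet_Iic (a := m - q)))
  -- sandwich upper bound
  let w : ℝ≥0∞ := (2 : ℝ≥0∞)⁻¹ ^ cP * ((m.factorial : ℝ≥0∞))⁻¹
  have hkey : ∀ (S : Set Ω) (D : Pat m K → Equiv.Perm (Fin m) → Set (Fin (K * T) → ℝ)),
      (∀ s σ, MeasurableSet (D s σ)) →
      (∀ s σ, S ∩ (Bset s ∩ {ω | π ω = σ}) = Nvec ⁻¹' (D s σ) ∩ Bset s ∩ {ω | π ω = σ}) →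
      μ S ≤ ∑ σ : Equiv.Perm (Fin m), ∑ s : Pat m K, ν (D s σ) * w := by
    intro S D hDm hSD
    have hsub : S ⊆ (⋃ σ : Equiv.Perm (Fin m), ⋃ s : Pat m K,
        (S ∩ (Bset s ∩ {ω | π ω = σ}))) ∪ (⋃ s : Pat m K, Bset s)ᶜ := by
      intro ω hω
      by_cases hB : ω ∈ ⋃ s : Pat m K, Bset s
      · left
        obtain ⟨s, hs⟩ := Set.mem_iUnion.mp hB
        exact Set.mem_iUnion.mpr ⟨π ω, Set.mem_iUnion.mpr ⟨s, hω, hs, rfl⟩⟩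
      · right; exact hB
    calc μ S ≤ μ ((⋃ σ : Equiv.Perm (Fin m), ⋃ s : Pat m K,
          (S ∩ (Bset s ∩ {ω | π ω = σ}))) ∪ (⋃ s : Pat m K, Bset s)ᶜ) := measure_mono hsub
      _ ≤ μ (⋃ σ : Equiv.Perm (Fin m), ⋃ s : Pat m K,
          (S ∩ (Bset s ∩ {ω | π ω = σ}))) + μ ((⋃ s : Pat m K, Bset s)ᶜ) := measure_union_le _ _
      _ = μ (⋃ σ : Equiv.Perm (Fin m), ⋃ s : Pat m K,
          (S ∩ (Bset s ∩ {ω | π ω = σ}))) := by rw [hcover, add_zero]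
      _ ≤ ∑ σ : Equiv.Perm (Fin m), μ (⋃ s : Pat m K, (S ∩ (Bset s ∩ {ω | π ω = σ}))) := by
          refine le_trans (measure_iUnion_le _) ?_
          rw [tsum_fintype]
      _ ≤ ∑ σ : Equiv.Perm (Fin m), ∑ s : Pat m K, μ (S ∩ (Bset s ∩ {ω | π ω = σ})) := by
          apply Finset.sum_le_sum
          intro σ _
          refine le_trans (measure_iUnion_le _) ?_
          rw [tsum_fintype]
      _ = ∑ σ : Equiv.Perm (Fin m), ∑ s : Pat m K, ν (D s σ) * w := by
          apply Finset.sum_congr rfl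
          intro σ _
          apply Finset.sum_congr rfl
          intro s _
          rw [hSD s σ, htriple (D s σ) (hDm s σ) s σ]
  have hED : ∀ s σ, E ∩ (Bset s ∩ {ω | π ω = σ})
      = Nvec ⁻¹' (Dset s σ) ∩ Bset s ∩ {ω | π ω = σ} := by
    intro s σ
    ext ω
    simp only [Set.mem_inter_iff, Set.mem_preimage, Set.mem_setOf_eq]
    constructor
    · rintro ⟨hE, hB, hπω⟩
      refine ⟨⟨?_, hB⟩, hπω⟩
      show rnk σ (Fm (svalF s) (Nvec ω)) 0 ≤ m - q
      rw [← hZB s ω hB, ← hπω]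
      exact hE
    · rintro ⟨⟨hD, hB⟩, hπω⟩
      refine ⟨?_, hB, hπω⟩
      show rnk (π ω) (Zf ω) 0 ≤ m - q
      rw [hπω, hZB s ω hB]
      exact hD
  have hEDc : ∀ s σ, Eᶜ ∩ (Bset s ∩ {ω | π ω = σ})
      = Nvec ⁻¹' ((Dset s σ)ᶜ) ∩ Bset s ∩ {ω | π ω = σ} := by
    intro s σ
    ext ω
    simp only [Set.mem_inter_iff, Set.mem_preimage, Set.mem_compl_iff, Set.mem_setOf_eq]
    constructor
    · rintro ⟨hE, hB, hπω⟩
      refine ⟨⟨?_, hB⟩, hπω⟩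
      show ¬ rnk σ (Fm (svalF s) (Nvec ω)) 0 ≤ m - q
      rw [← hZB s ω hB, ← hπω]
      exact hE
    · rintro ⟨⟨hD, hB⟩, hπω⟩
      refine ⟨?_, hB, hπω⟩
      show ¬ rnk (π ω) (Zf ω) 0 ≤ m - q
      rw [hπω, hZB s ω hB]
      exact hD
  have hUB : μ E ≤ ∑ σ : Equiv.Perm (Fin m), ∑ s : Pat m K, ν (Dset s σ) * w :=
    hkey E Dset hDmeas hED
  have hUBc : μ Eᶜ ≤ ∑ σ : Equiv.Perm (Fin m), ∑ s : Pat m K, ν ((Dset s σ)ᶜ) * w :=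
    hkey Eᶜ (fun s σ => (Dset s σ)ᶜ) (fun s σ => (hDmeas s σ).compl) hEDc
  -- total mass identity
  set U : ℝ≥0∞ := ∑ σ : Equiv.Perm (Fin m), ∑ s : Pat m K, ν (Dset s σ) * w with hU
  set U' : ℝ≥0∞ := ∑ σ : Equiv.Perm (Fin m), ∑ s : Pat m K, ν ((Dset s σ)ᶜ) * w with hU'
  have hUsum : U + U' = 1 := by
    rw [hU, hU', ← Finset.sum_add_distrib]
    have hσ : ∀ σ : Equiv.Perm (Fin m),
        ((∑ s : Pat m K, ν (Dset s σ) * w) + ∑ s : Pat m K, ν ((Dset s σ)ᶜ) * w)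
          = ∑ s : Pat m K, w := by
      intro σ
      rw [← Finset.sum_add_distrib]
      apply Finset.sum_congr rfl
      intro s _
      rw [← add_mul, measure_add_measure_compl (hDmeas s σ), measure_univ, one_mul]
    rw [Finset.sum_congr rfl (fun σ _ => hσ σ)]
    rw [Finset.sum_const, Finset.sum_const, Finset.card_univ, Finset.card_univ,
      Fintype.card_perm, Fintype.card_fin]
    have hcardPat : Fintype.card (Pat m K) = 2 ^ cP := by
      show Fintype.card (PatIdx m K → Bool) = 2 ^ cP
      rw [Fintype.card_fun, Fintype.card_bool]
    rw [hcardPat]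
    show ((m.factorial) : ℕ) • ((2 ^ cP : ℕ) • w) = 1
    rw [nsmul_eq_mul, nsmul_eq_mul, Nat.cast_pow]
    show (m.factorial : ℝ≥0∞) * ((2:ℕ) ^ cP * ((2 : ℝ≥0∞)⁻¹ ^ cP * ((m.factorial : ℝ≥0∞))⁻¹)) = 1
    push_cast
    rw [← mul_assoc ((2:ℝ≥0∞) ^ cP), ← mul_pow, ENNReal.mul_inv_cancel two_ne_zero (by norm_num),
      one_pow, one_mul, ENNReal.mul_inv_cancel (by exact_mod_cast m.factorial_ne_zero) (by simp)]
  have hμE : μ E = U := by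
    have h1 : (1 : ℝ≥0∞) ≤ μ E + μ Eᶜ := by
      have := measure_union_le (μ := μ) E Eᶜ
      rwa [Set.union_compl_self, measure_univ] at this
    have hU'le : U' ≤ 1 := by rw [← hUsum]; exact le_add_self
    have hU'top : U' ≠ ⊤ := (hU'le.trans_lt (by norm_num)).ne
    apply le_antisymm hUB
    have h2 : U + U' ≤ μ E + U' := by
      rw [hUsum]
      exact h1.trans (add_le_add le_rfl hUBc)
    exact (ENNReal.add_le_add_iff_right hU'top).mp h2
  -- computing U
  have hUval : U = ((m - q : ℕ) : ℝ≥0∞) / (m : ℝ≥0∞) := by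
    have hDdecomp : ∀ (s : Pat m K) (σ : Equiv.Perm (Fin m)),
        ν (Dset s σ) = ∑ r ∈ Finset.Icc 1 (m - q), ν (Gset 0 s σ r) := by
      intro s σ
      have hset : Dset s σ = ⋃ r ∈ Finset.Icc 1 (m - q), Gset 0 s σ r := by
        ext x
        constructor
        · intro h
          have h' : rnk σ (Fm (svalF s) x) 0 ≤ m - q := h
          exact Set.mem_biUnion (Finset.mem_Icc.mpr ⟨rnk_one_le σ _ 0, h'⟩)
            (rfl : rnk σ (Fm (svalF s) x) 0 = _)
        · intro hx
          rw [Set.mem_iUnion₂] at hx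
          obtain ⟨r, hr, hxr⟩ := hx
          have hxr' : rnk σ (Fm (svalF s) x) 0 = r := hxr
          show rnk σ (Fm (svalF s) x) 0 ≤ m - q
          rw [hxr']
          exact (Finset.mem_Icc.mp hr).2
      have hdisj : (↑(Finset.Icc 1 (m - q)) : Set ℕ).PairwiseDisjoint
          (fun r => Gset 0 s σ r) := by
        intro r _ r' _ hne
        apply Set.disjoint_left.mpr
        intro x hx hx'
        have h1 : rnk σ (Fm (svalF s) x) 0 = r := hx
        have h2 : rnk σ (Fm (svalF s) x) 0 = r' := hx'
        exact hne (h1.symm.trans h2)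
      rw [hset, measure_biUnion_finset hdisj (fun r _ => hGmeas 0 s σ r)]
    have hrelabel : ∀ (j : Fin m) (r : ℕ),
        (∑ σ : Equiv.Perm (Fin m), ∑ s : Pat m K, ν (Gset j s σ r))
          = ∑ σ : Equiv.Perm (Fin m), ∑ s : Pat m K, ν (Gset 0 s σ r) := by
      intro j r
      set τ : Equiv.Perm (Fin m) := Equiv.swap 0 j with hτdef
      have hτ0 : τ 0 = j := Equiv.swap_apply_left 0 j
      have hstep : ∀ (s : Pat m K) (σ : Equiv.Perm (Fin m)),
          ν (Gset j s σ r) = ν (Gset 0 (PsiF τ s) (σ * τ) r) := by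
        intro s σ
        have hcomp : ∀ x : Fin (K * T) → ℝ,
            (Fm (svalF s) x) ∘ τ = Fm (fun i => svalF s (τ i)) x := fun x => rfl
        have h1 : Gset j s σ r = {x | rnk (σ * τ) (Fm (fun i => svalF s (τ i)) x) 0 = r} := by
          ext x
          show rnk σ (Fm (svalF s) x) j = r ↔ _
          rw [← hτ0, rnk_relabel σ τ _ 0, hcomp x]
          exact Iff.rfl
        set ε : Fin (K * T) → ℝ := fun t => svalF s (τ 0) (blk t) with hεdef
        have hε : ∀ t, ε t = 1 ∨ ε t = -1 := fun t => svalF_cases _ _ _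
        have hFmflip : ∀ x : Fin (K * T) → ℝ,
            Fm (fun i => svalF s (τ i)) (fun t => ε t * x t) = Fm (svalF (PsiF τ s)) x := by
          intro x
          funext i
          have hsum : ∑ t : Fin (K * T), (svalF s (τ i) (blk t) * (ε t * x t)) • φ t
              = ∑ t : Fin (K * T), (svalF (PsiF τ s) i (blk t) * x t) • φ t := by
            apply Finset.sum_congr rfl
            intro t _
            rw [svalF_PsiF]
            show (svalF s (τ i) (blk t) * (svalF s (τ 0) (blk t) * x t)) • φ t = _
            ring_nf
          show spsNormSq (Rhalf⁻¹ *ᵥ (((K * T : ℕ) : ℝ)⁻¹ •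
              ∑ t : Fin (K * T), (svalF s (τ i) (blk t) * (ε t * x t)) • φ t))
            = spsNormSq (Rhalf⁻¹ *ᵥ (((K * T : ℕ) : ℝ)⁻¹ •
              ∑ t : Fin (K * T), (svalF (PsiF τ s) i (blk t) * x t) • φ t))
          rw [hsum]
        have hmeasmid : MeasurableSet {x | rnk (σ * τ) (Fm (fun i => svalF s (τ i)) x) 0 = r} :=
          (hFmmeas _) ((measurable_rnk (σ * τ) 0) (measurableSet_singleton r))
        have h2 : (fun x (t : Fin (K * T)) => ε t * x t) ⁻¹'
              {x | rnk (σ * τ) (Fm (fun i => svalF s (τ i)) x) 0 = r}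
            = Gset 0 (PsiF τ s) (σ * τ) r := by
          ext x
          show rnk (σ * τ) (Fm (fun i => svalF s (τ i)) (fun t => ε t * x t)) 0 = r ↔ _
          rw [hFmflip x]
          exact Iff.rfl
        rw [h1, ← hflip ε hε _ hmeasmid, h2]
      calc (∑ σ : Equiv.Perm (Fin m), ∑ s : Pat m K, ν (Gset j s σ r))
          = ∑ σ : Equiv.Perm (Fin m), ∑ s : Pat m K, ν (Gset 0 (PsiF τ s) (σ * τ) r) :=
            Finset.sum_congr rfl fun σ _ => Finset.sum_congr rfl fun s _ => hstep s σ
        _ = ∑ σ : Equiv.Perm (Fin m), ∑ s : Pat m K, ν (Gset 0 s (σ * τ) r) :=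
            Finset.sum_congr rfl fun σ _ =>
              Equiv.sum_comp (PsiE τ) (fun s => ν (Gset 0 s (σ * τ) r))
        _ = ∑ σ : Equiv.Perm (Fin m), ∑ s : Pat m K, ν (Gset 0 s σ r) :=
            Equiv.sum_comp (Equiv.mulRight τ) (fun σ => ∑ s : Pat m K, ν (Gset 0 s σ r))
    have hpart : ∀ (σ : Equiv.Perm (Fin m)) (s : Pat m K) (r : ℕ), 1 ≤ r → r ≤ m →
        ∑ j : Fin m, ν (Gset j s σ r) = 1 := by
      intro σ s r h1 h2
      have hdisj : Pairwise (Function.onFun Disjoint (fun j => Gset j s σ r)) := by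
        intro a b hab
        apply Set.disjoint_left.mpr
        intro x hxa hxb
        have ha : rnk σ (Fm (svalF s) x) a = r := hxa
        have hb : rnk σ (Fm (svalF s) x) b = r := hxb
        exact hab (rnk_injective σ _ (ha.trans hb.symm))
      have huniv : (⋃ j, Gset j s σ r) = Set.univ := by
        ext x
        simp only [Set.mem_iUnion, Set.mem_univ, iff_true]
        exact rnk_surjective σ (Fm (svalF s) x) r h1 h2
      rw [← tsum_fintype (L := SummationFilter.unconditional _), ← measure_iUnion hdisj (fun j => hGmeas j s σ r), huniv, measure_univ]
    have hTot : ∀ r : ℕ, 1 ≤ r → r ≤ m →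
        (m : ℝ≥0∞) * (∑ σ : Equiv.Perm (Fin m), ∑ s : Pat m K, ν (Gset 0 s σ r))
          = (m.factorial : ℝ≥0∞) * 2 ^ cP := by
      intro r h1 h2
      have hswap : ∑ j : Fin m, (∑ σ : Equiv.Perm (Fin m), ∑ s : Pat m K, ν (Gset j s σ r))
          = ∑ σ : Equiv.Perm (Fin m), ∑ s : Pat m K, (∑ j : Fin m, ν (Gset j s σ r)) := by
        rw [Finset.sum_comm]
        exact Finset.sum_congr rfl fun σ _ => Finset.sum_comm
      have lhs1 : ∑ j : Fin m, (∑ σ : Equiv.Perm (Fin m), ∑ s : Pat m K, ν (Gset j s σ r))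
          = (m : ℝ≥0∞) * (∑ σ : Equiv.Perm (Fin m), ∑ s : Pat m K, ν (Gset 0 s σ r)) := by
        rw [Finset.sum_congr rfl (fun j _ => hrelabel j r), Finset.sum_const,
          Finset.card_univ, Fintype.card_fin, nsmul_eq_mul]
      rw [← lhs1, hswap,
        Finset.sum_congr rfl fun σ _ => Finset.sum_congr rfl fun s _ => hpart σ s r h1 h2,
        Finset.sum_const, Finset.sum_const, Finset.card_univ, Finset.card_univ,
        Fintype.card_perm, Fintype.card_fin]
      have hcardPat : Fintype.card (Pat m K) = 2 ^ cP := by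
        show Fintype.card (PatIdx m K → Bool) = 2 ^ cP
        rw [Fintype.card_fun, Fintype.card_bool]
      rw [hcardPat, nsmul_eq_mul, nsmul_eq_mul, mul_one]
      push_cast
      ring
    have hone : (m.factorial : ℝ≥0∞) * 2 ^ cP * w = 1 := by
      have h2 : (2 : ℝ≥0∞) ^ cP * (2 : ℝ≥0∞)⁻¹ ^ cP = 1 := by
        rw [← mul_pow, ENNReal.mul_inv_cancel two_ne_zero (by norm_num), one_pow]
      have hf : (m.factorial : ℝ≥0∞) * (m.factorial : ℝ≥0∞)⁻¹ = 1 :=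
        ENNReal.mul_inv_cancel (by exact_mod_cast m.factorial_ne_zero) (by simp)
      calc (m.factorial : ℝ≥0∞) * 2 ^ cP * ((2 : ℝ≥0∞)⁻¹ ^ cP * ((m.factorial : ℝ≥0∞))⁻¹)
          = ((m.factorial : ℝ≥0∞) * (m.factorial : ℝ≥0∞)⁻¹)
              * ((2 : ℝ≥0∞) ^ cP * (2 : ℝ≥0∞)⁻¹ ^ cP) := by ring
        _ = 1 := by rw [h2, hf, one_mul]
    have hfactor : U = (∑ σ : Equiv.Perm (Fin m), ∑ s : Pat m K, ν (Dset s σ)) * w := by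
      rw [hU, Finset.sum_mul]
      exact Finset.sum_congr rfl fun σ _ => by rw [Finset.sum_mul]
    have hsumD : ∑ σ : Equiv.Perm (Fin m), ∑ s : Pat m K, ν (Dset s σ)
        = ∑ r ∈ Finset.Icc 1 (m - q),
            (∑ σ : Equiv.Perm (Fin m), ∑ s : Pat m K, ν (Gset 0 s σ r)) := by
      rw [Finset.sum_congr rfl fun σ _ => Finset.sum_congr rfl fun s _ => hDdecomp s σ,
        Finset.sum_congr rfl fun σ _ => Finset.sum_comm]
      exact Finset.sum_comm
    have hmU : (m : ℝ≥0∞) * U = ((m - q : ℕ) : ℝ≥0∞) := by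
      have hper : ∀ r ∈ Finset.Icc 1 (m - q),
          (m : ℝ≥0∞) * (∑ σ : Equiv.Perm (Fin m), ∑ s : Pat m K, ν (Gset 0 s σ r))
            = (m.factorial : ℝ≥0∞) * 2 ^ cP := by
        intro r hr
        obtain ⟨h1, h2⟩ := Finset.mem_Icc.mp hr
        exact hTot r h1 (h2.trans (Nat.sub_le m q))
      rw [hfactor, hsumD, ← mul_assoc, Finset.mul_sum,
        Finset.sum_congr rfl hper, Finset.sum_const, Nat.card_Icc]
      simp only [Nat.add_sub_cancel]
      rw [nsmul_eq_mul, mul_assoc, hone, mul_one]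
    rw [ENNReal.eq_div_iff (by exact_mod_cast (Nat.pos_of_ne_zero (NeZero.ne m)).ne')
      (by simp)]
    exact hmU
  rw [hμE, hUval]
  have hmpos : (0 : ℝ) < m := by
    have : 0 < m := lt_of_le_of_lt (Nat.zero_le q) hqm
    exact_mod_cast this
  rw [show (1 - (q : ℝ) / m) = ((m - q : ℕ) : ℝ) / (m : ℝ) by
    rw [Nat.cast_sub hqm.le]
    field_simp]
  rw [ENNReal.ofReal_div_of_pos hmpos, ENNReal.ofReal_natCast, ENNReal.ofReal_natCast]


end
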